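/- Let H_S be a d×d Hermitian complex matrix, H_R an m×m Hermitian complex matrix, γ_R an m×m complex matrix commuting with H_R, and let U be a unitary matrix of size d·m that commutes with the total Hamiltonian H_S ⊗ I_m + I_d ⊗ H_R. Then for every t ∈ ℝ and every d×d complex matrix ρ, Tr_R[U ((exp(−itH_S) ρ exp(itH_S)) ⊗ γ_R) U†] = exp(−itH_S) · Tr_R[U (ρ ⊗ γ_R) U†] · exp(itH_S), where exp denotes the matrix exponential. -/

import Mathlib

open Matrix Kronecker

/-- Partial trace over the second (bath) tensor factor. -/
noncomputable def ptrace {d m : ℕ}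
    (M : Matrix (Fin d × Fin m) (Fin d × Fin m) ℂ) : Matrix (Fin d) (Fin d) ℂ :=
  fun s s' => ∑ r : Fin m, M (s, r) (s', r)

section Aux
variable {d m : ℕ}

/-- `A ↦ A ⊗ₖ 1` as an algebra homomorphism. -/
noncomputable def klAlg (d m : ℕ) :
    Matrix (Fin d) (Fin d) ℂ →ₐ[ℂ] Matrix (Fin d × Fin m) (Fin d × Fin m) ℂ where
  toFun A := A ⊗ₖ (1 : Matrix (Fin m) (Fin m) ℂ)
  map_one' := Matrix.one_kronecker_one
  map_mul' A B := by rw [← Matrix.mul_kronecker_mul, Matrix.one_mul]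
  map_zero' := Matrix.zero_kronecker _
  map_add' A B := Matrix.add_kronecker A B _
  commutes' r := by
    simp [Algebra.algebraMap_eq_smul_one, Matrix.smul_kronecker, Matrix.one_kronecker_one]

/-- `B ↦ 1 ⊗ₖ B` as an algebra homomorphism. -/
noncomputable def krAlg (d m : ℕ) :
    Matrix (Fin m) (Fin m) ℂ →ₐ[ℂ] Matrix (Fin d × Fin m) (Fin d × Fin m) ℂ where
  toFun B := (1 : Matrix (Fin d) (Fin d) ℂ) ⊗ₖ B
  map_one' := Matrix.one_kronecker_one
  map_mul' A B := by rw [← Matrix.mul_kronecker_mul, Matrix.one_mul]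
  map_zero' := Matrix.kronecker_zero _
  map_add' A B := Matrix.kronecker_add _ A B
  commutes' r := by
    simp [Algebra.algebraMap_eq_smul_one, Matrix.kronecker_smul, Matrix.one_kronecker_one]

theorem exp_kronecker_one (X : Matrix (Fin d) (Fin d) ℂ) :
    NormedSpace.exp (X ⊗ₖ (1 : Matrix (Fin m) (Fin m) ℂ))
      = NormedSpace.exp X ⊗ₖ (1 : Matrix (Fin m) (Fin m) ℂ) := by
  letI : SeminormedRing (Matrix (Fin d) (Fin d) ℂ) := Matrix.linftyOpSemiNormedRing
  letI : NormedRing (Matrix (Fin d) (Fin d) ℂ) := Matrix.linftyOpNormedRing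
  letI : NormedAlgebra ℂ (Matrix (Fin d) (Fin d) ℂ) := Matrix.linftyOpNormedAlgebra
  letI : NormedAlgebra ℚ (Matrix (Fin d) (Fin d) ℂ) := Matrix.linftyOpNormedAlgebra
  letI : SeminormedRing (Matrix (Fin d × Fin m) (Fin d × Fin m) ℂ) :=
    Matrix.linftyOpSemiNormedRing
  letI : NormedRing (Matrix (Fin d × Fin m) (Fin d × Fin m) ℂ) := Matrix.linftyOpNormedRing
  letI : NormedAlgebra ℂ (Matrix (Fin d × Fin m) (Fin d × Fin m) ℂ) :=
    Matrix.linftyOpNormedAlgebra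
  exact (NormedSpace.map_exp (klAlg d m)
    (klAlg d m).toLinearMap.continuous_of_finiteDimensional X).symm

theorem exp_one_kronecker (X : Matrix (Fin m) (Fin m) ℂ) :
    NormedSpace.exp ((1 : Matrix (Fin d) (Fin d) ℂ) ⊗ₖ X)
      = (1 : Matrix (Fin d) (Fin d) ℂ) ⊗ₖ NormedSpace.exp X := by
  letI : SeminormedRing (Matrix (Fin m) (Fin m) ℂ) := Matrix.linftyOpSemiNormedRing
  letI : NormedRing (Matrix (Fin m) (Fin m) ℂ) := Matrix.linftyOpNormedRing
  letI : NormedAlgebra ℂ (Matrix (Fin m) (Fin m) ℂ) := Matrix.linftyOpNormedAlgebra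
  letI : NormedAlgebra ℚ (Matrix (Fin m) (Fin m) ℂ) := Matrix.linftyOpNormedAlgebra
  letI : SeminormedRing (Matrix (Fin d × Fin m) (Fin d × Fin m) ℂ) :=
    Matrix.linftyOpSemiNormedRing
  letI : NormedRing (Matrix (Fin d × Fin m) (Fin d × Fin m) ℂ) := Matrix.linftyOpNormedRing
  letI : NormedAlgebra ℂ (Matrix (Fin d × Fin m) (Fin d × Fin m) ℂ) :=
    Matrix.linftyOpNormedAlgebra
  exact (NormedSpace.map_exp (krAlg d m)
    (krAlg d m).toLinearMap.continuous_of_finiteDimensional X).symm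

end Aux

theorem ptrace_kron_one_mul {d m : ℕ} (A : Matrix (Fin d) (Fin d) ℂ)
    (M : Matrix (Fin d × Fin m) (Fin d × Fin m) ℂ) :
    ptrace ((A ⊗ₖ (1 : Matrix (Fin m) (Fin m) ℂ)) * M) = A * ptrace M := by
  ext s s'
  simp only [ptrace, Matrix.mul_apply, Matrix.kroneckerMap_apply, Fintype.sum_prod_type,
    Matrix.one_apply, mul_ite, mul_one, mul_zero, one_mul, ite_mul, zero_mul,
    Finset.sum_ite_eq, Finset.sum_ite_eq', Finset.mem_univ, if_true, Finset.mul_sum]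
  exact Finset.sum_comm

theorem ptrace_mul_kron_one {d m : ℕ} (C : Matrix (Fin d) (Fin d) ℂ)
    (M : Matrix (Fin d × Fin m) (Fin d × Fin m) ℂ) :
    ptrace (M * (C ⊗ₖ (1 : Matrix (Fin m) (Fin m) ℂ))) = ptrace M * C := by
  ext s s'
  simp only [ptrace, Matrix.mul_apply, Matrix.kroneckerMap_apply, Fintype.sum_prod_type,
    Matrix.one_apply, mul_ite, mul_one, mul_zero, one_mul, ite_mul, zero_mul,
    Finset.sum_ite_eq, Finset.sum_ite_eq', Finset.mem_univ, if_true, Finset.sum_mul]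
  exact Finset.sum_comm

theorem ptrace_one_kron_comm {d m : ℕ} (B : Matrix (Fin m) (Fin m) ℂ)
    (N : Matrix (Fin d × Fin m) (Fin d × Fin m) ℂ) :
    ptrace (((1 : Matrix (Fin d) (Fin d) ℂ) ⊗ₖ B) * N)
      = ptrace (N * ((1 : Matrix (Fin d) (Fin d) ℂ) ⊗ₖ B)) := by
  ext s s'
  have hL : ∀ r : Fin m, (((1 : Matrix (Fin d) (Fin d) ℂ) ⊗ₖ B) * N) (s, r) (s', r)
      = ∑ b : Fin m, B r b * N (s, b) (s', r) := by
    intro r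
    rw [Matrix.mul_apply, Fintype.sum_prod_type, Finset.sum_eq_single s]
    · simp [Matrix.one_apply]
    · intro a _ ha
      simp [Matrix.one_apply_ne (Ne.symm ha)]
    · simp
  have hR : ∀ r : Fin m, (N * ((1 : Matrix (Fin d) (Fin d) ℂ) ⊗ₖ B)) (s, r) (s', r)
      = ∑ e : Fin m, N (s, r) (s', e) * B e r := by
    intro r
    rw [Matrix.mul_apply, Fintype.sum_prod_type, Finset.sum_eq_single s']
    · simp [Matrix.one_apply]
    · intro a _ ha
      simp [Matrix.one_apply_ne ha]
    · simp
  simp only [ptrace, hL, hR]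
  rw [Finset.sum_comm]
  exact Finset.sum_congr rfl fun b _ => Finset.sum_congr rfl fun r _ => mul_comm _ _

theorem ptrace_one_kron_conj {d m : ℕ} (B Bi : Matrix (Fin m) (Fin m) ℂ)
    (hBi : Bi * B = 1)
    (M : Matrix (Fin d × Fin m) (Fin d × Fin m) ℂ) :
    ptrace (((1 : Matrix (Fin d) (Fin d) ℂ) ⊗ₖ B) * M *
      ((1 : Matrix (Fin d) (Fin d) ℂ) ⊗ₖ Bi)) = ptrace M := by
  rw [mul_assoc, ptrace_one_kron_comm, mul_assoc, ← Matrix.mul_kronecker_mul, hBi, one_mul,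
    Matrix.one_kronecker_one, mul_one]

/-- **Time-translation symmetry of thermal operations**: if the joint unitary
`U` commutes with the total Hamiltonian `H_S ⊗ 1 + 1 ⊗ H_R` and the bath state
`γ_R` commutes with `H_R`, then the induced channel is covariant with respect to
the time evolution generated by `H_S`. -/
theorem thermal_operation_time_translation_symmetric
    (d m : ℕ) (HS : Matrix (Fin d) (Fin d) ℂ) (hHS : HS.IsHermitian)
    (HR : Matrix (Fin m) (Fin m) ℂ) (hHR : HR.IsHermitian)
    (γR : Matrix (Fin m) (Fin m) ℂ) (hγR : γR * HR = HR * γR)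
    (U : Matrix (Fin d × Fin m) (Fin d × Fin m) ℂ)
    (hU : U ∈ Matrix.unitaryGroup (Fin d × Fin m) ℂ)
    (hcomm : U * (HS ⊗ₖ (1 : Matrix (Fin m) (Fin m) ℂ)
                  + (1 : Matrix (Fin d) (Fin d) ℂ) ⊗ₖ HR)
           = (HS ⊗ₖ (1 : Matrix (Fin m) (Fin m) ℂ)
                  + (1 : Matrix (Fin d) (Fin d) ℂ) ⊗ₖ HR) * U)
    (t : ℝ) (ρ : Matrix (Fin d) (Fin d) ℂ) :
    ptrace (U * ((NormedSpace.exp ((-(Complex.I * t)) • HS) * ρ *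
                  NormedSpace.exp ((Complex.I * t) • HS)) ⊗ₖ γR) * Uᴴ)
      = NormedSpace.exp ((-(Complex.I * t)) • HS) *
          ptrace (U * (ρ ⊗ₖ γR) * Uᴴ) *
          NormedSpace.exp ((Complex.I * t) • HS) := by
  set z : ℂ := -(Complex.I * t) with hz
  set w : ℂ := Complex.I * t with hw
  set H : Matrix (Fin d × Fin m) (Fin d × Fin m) ℂ :=
    HS ⊗ₖ (1 : Matrix (Fin m) (Fin m) ℂ) + (1 : Matrix (Fin d) (Fin d) ℂ) ⊗ₖ HR with hH
  set E := NormedSpace.exp (z • HS) with hE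
  set E' := NormedSpace.exp (w • HS) with hE'
  set F := NormedSpace.exp (z • HR) with hF
  set F' := NormedSpace.exp (w • HR) with hF'
  have hzw : z + w = 0 := by simp [hz, hw]
  have hwz : w + z = 0 := by simp [hz, hw]
  -- exp(z•H) = exp(z•HS) ⊗ exp(z•HR)
  have hexp : ∀ u : ℂ, NormedSpace.exp (u • H)
      = NormedSpace.exp (u • HS) ⊗ₖ NormedSpace.exp (u • HR) := by
    intro u
    have hcsr : Commute ((u • HS) ⊗ₖ (1 : Matrix (Fin m) (Fin m) ℂ))
        ((1 : Matrix (Fin d) (Fin d) ℂ) ⊗ₖ (u • HR)) := by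
      unfold Commute SemiconjBy
      rw [← Matrix.mul_kronecker_mul, ← Matrix.mul_kronecker_mul, one_mul, mul_one,
        one_mul, mul_one]
    have : u • H = (u • HS) ⊗ₖ (1 : Matrix (Fin m) (Fin m) ℂ)
        + (1 : Matrix (Fin d) (Fin d) ℂ) ⊗ₖ (u • HR) := by
      rw [hH, smul_add, Matrix.smul_kronecker, Matrix.kronecker_smul]
    rw [this, Matrix.exp_add_of_commute _ _ hcsr, exp_kronecker_one, exp_one_kronecker,
      ← Matrix.mul_kronecker_mul, one_mul, mul_one]
  -- inverses
  have hinv : ∀ (n : ℕ) (X : Matrix (Fin n) (Fin n) ℂ),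
      NormedSpace.exp (w • X) * NormedSpace.exp (z • X) = 1 := by
    intro n X
    rw [← Matrix.exp_add_of_commute _ _ (((Commute.refl X).smul_left w).smul_right z),
      ← add_smul, hwz, zero_smul, NormedSpace.exp_zero]
  have hinv' : ∀ (n : ℕ) (X : Matrix (Fin n) (Fin n) ℂ),
      NormedSpace.exp (z • X) * NormedSpace.exp (w • X) = 1 := by
    intro n X
    rw [← Matrix.exp_add_of_commute _ _ (((Commute.refl X).smul_left z).smul_right w),
      ← add_smul, hzw, zero_smul, NormedSpace.exp_zero]
  -- γR is invariant under the bath evolution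
  have hγF : F * γR * F' = γR := by
    have hcg0 : Commute γR HR := hγR
    have hcg : Commute γR F' := (hcg0.smul_right w).exp_right
    rw [mul_assoc, hcg.eq, ← mul_assoc, hinv' m HR, one_mul]
  -- U commutes with the evolved total Hamiltonian
  have hUH : Commute U H := hcomm
  have hUG : ∀ u : ℂ, U * NormedSpace.exp (u • H) = NormedSpace.exp (u • H) * U := by
    intro u
    exact ((hUH.smul_right u).exp_right).eq
  -- unitarity
  have hUsU : Uᴴ * U = 1 := by
    simpa [Matrix.star_eq_conjTranspose] using hU.1
  have hUUs : U * Uᴴ = 1 := by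
    simpa [Matrix.star_eq_conjTranspose] using hU.2
  have hG'Us : NormedSpace.exp (w • H) * Uᴴ = Uᴴ * NormedSpace.exp (w • H) := by
    set G' := NormedSpace.exp (w • H) with hG'
    calc G' * Uᴴ = (Uᴴ * U) * G' * Uᴴ := by rw [hUsU, one_mul]
      _ = Uᴴ * (U * G') * Uᴴ := by simp only [mul_assoc]
      _ = Uᴴ * (G' * U) * Uᴴ := by rw [hUG w]
      _ = Uᴴ * G' * (U * Uᴴ) := by simp only [mul_assoc]
      _ = Uᴴ * G' := by rw [hUUs, mul_one]
  have hGsplit : NormedSpace.exp (z • H)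
      = (E ⊗ₖ (1 : Matrix (Fin m) (Fin m) ℂ)) * ((1 : Matrix (Fin d) (Fin d) ℂ) ⊗ₖ F) := by
    rw [hexp z, ← Matrix.mul_kronecker_mul, mul_one, one_mul]
  have hG'split : NormedSpace.exp (w • H)
      = ((1 : Matrix (Fin d) (Fin d) ℂ) ⊗ₖ F') * (E' ⊗ₖ (1 : Matrix (Fin m) (Fin m) ℂ)) := by
    rw [hexp w, ← Matrix.mul_kronecker_mul, mul_one, one_mul]
  have h1 : (E * ρ * E') ⊗ₖ γR
      = NormedSpace.exp (z • H) * (ρ ⊗ₖ γR) * NormedSpace.exp (w • H) := by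
    conv_rhs => rw [hexp z, hexp w, ← Matrix.mul_kronecker_mul, ← Matrix.mul_kronecker_mul]
    rw [hγF]
  have keyM : U * ((E * ρ * E') ⊗ₖ γR) * Uᴴ
      = (E ⊗ₖ (1 : Matrix (Fin m) (Fin m) ℂ)) *
        (((1 : Matrix (Fin d) (Fin d) ℂ) ⊗ₖ F) * (U * (ρ ⊗ₖ γR) * Uᴴ) *
          ((1 : Matrix (Fin d) (Fin d) ℂ) ⊗ₖ F')) *
        (E' ⊗ₖ (1 : Matrix (Fin m) (Fin m) ℂ)) := by
    calc U * ((E * ρ * E') ⊗ₖ γR) * Uᴴ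
        = U * (NormedSpace.exp (z • H) * (ρ ⊗ₖ γR) * NormedSpace.exp (w • H)) * Uᴴ := by
          rw [h1]
      _ = (U * NormedSpace.exp (z • H)) * (ρ ⊗ₖ γR) * (NormedSpace.exp (w • H) * Uᴴ) := by
          simp only [mul_assoc]
      _ = (NormedSpace.exp (z • H) * U) * (ρ ⊗ₖ γR) * (Uᴴ * NormedSpace.exp (w • H)) := by
          rw [hUG z, hG'Us]
      _ = ((E ⊗ₖ (1 : Matrix (Fin m) (Fin m) ℂ)) * ((1 : Matrix (Fin d) (Fin d) ℂ) ⊗ₖ F)) *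
            ((U * (ρ ⊗ₖ γR) * Uᴴ)) *
            (((1 : Matrix (Fin d) (Fin d) ℂ) ⊗ₖ F') *
              (E' ⊗ₖ (1 : Matrix (Fin m) (Fin m) ℂ))) := by
          rw [← hGsplit, ← hG'split]; simp only [mul_assoc]
      _ = _ := by simp only [mul_assoc]
  rw [keyM, ptrace_mul_kron_one, ptrace_kron_one_mul,
    ptrace_one_kron_conj F F' (hinv m HR)]
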